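/- Let n, k ≥ 1 be integers with n ≥ 10k, let r ≥ 0, and let F be a set of k symmetric-r functions taking strictly positive values on {1,…,n}. Define f(x) := min_{f'∈F} f'(x) for every x ∈ {1,…,n}. Then for every x ∈ {1,…,n}, f(x) / (∑_{x'=1}^n f(x')) ≤ (10k)^{r+1} / n. -/
import Mathlib

lemma card_le_of_interval (B : Finset ℕ) (L : ℝ) (hL : 0 ≤ L)
    (h : ∀ y ∈ B, ∀ z ∈ B, (y : ℝ) ≤ (z : ℝ) + L) : (B.card : ℝ) ≤ L + 1 := by
  rcases B.eq_empty_or_nonempty with rfl | hB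
  · simp; linarith
  · have hsub : B ⊆ Finset.Icc (B.min' hB) (B.min' hB + ⌊L⌋₊) := by
      intro y hy
      rw [Finset.mem_Icc]
      refine ⟨B.min'_le y hy, ?_⟩
      have h2 : B.min' hB ≤ y := B.min'_le y hy
      have h1 : (y : ℝ) ≤ (B.min' hB : ℝ) + L := h y hy _ (B.min'_mem hB)
      have h3 : ((y - B.min' hB : ℕ) : ℝ) ≤ L := by
        rw [Nat.cast_sub h2]; linarith
      have h4 := Nat.le_floor h3
      omega
    have hc := Finset.card_le_card hsub
    rw [Nat.card_Icc] at hc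
    have h5 : B.card ≤ ⌊L⌋₊ + 1 := by omega
    have hfl := Nat.floor_le hL
    calc (B.card : ℝ) ≤ (⌊L⌋₊ : ℝ) + 1 := by exact_mod_cast h5
      _ ≤ L + 1 := by linarith

set_option maxHeartbeats 1000000

theorem min_of_symmetric_r_sensitivity (n k : ℕ) (hk : 1 ≤ k) (hn : 10 * k ≤ n)
    (r : ℝ) (hr : 0 ≤ r) (F : Finset (ℝ → ℝ)) (hFcard : F.card = k)
    (hFne : F.Nonempty)
    (hsym : ∀ f' ∈ F, ∃ (a : ℝ) (g : ℝ → ℝ),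
      (∀ x y, 0 ≤ x → x ≤ y → g x ≤ g y) ∧
      (∀ x, 0 ≤ x → 0 ≤ g x) ∧
      (∀ c x, 1 ≤ c → 0 ≤ x → g (c * x) ≤ c ^ r * g x) ∧
      (∀ x : ℝ, f' x = g |x - a|))
    (hposval : ∀ f' ∈ F, ∀ x ∈ Finset.Icc 1 n, 0 < f' (x : ℕ))
    (f : ℕ → ℝ) (hf : ∀ x ∈ Finset.Icc 1 n, f x = F.inf' hFne (fun f' => f' x))
    (x : ℕ) (hx : x ∈ Finset.Icc 1 n) :
    f x / (∑ x' ∈ Finset.Icc 1 n, f x') ≤ (10 * k : ℝ) ^ (r + 1) / n := by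
  classical
  choose a g hg_mono hg_nonneg hg_lip hfg using hsym
  set S := Finset.Icc 1 n with hSdef
  have hkR : (1:ℝ) ≤ (k:ℝ) := by exact_mod_cast hk
  set K : ℝ := 10 * (k:ℝ) with hKdef
  have hK10 : (10:ℝ) ≤ K := by rw [hKdef]; linarith
  have hK0 : (0:ℝ) < K := by linarith
  set T : ℝ := K ^ r with hTdef
  have hT1 : 1 ≤ T := Real.one_le_rpow (by linarith) hr
  have hT0 : (0:ℝ) < T := by linarith
  have hnR : (10:ℝ) * (k:ℝ) ≤ (n:ℝ) := by exact_mod_cast hn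
  have hn0 : (0:ℝ) < (n:ℝ) := by linarith
  -- positivity of f on S
  have hfpos : ∀ y ∈ S, 0 < f y := by
    intro y hy
    rw [hf y hy, Finset.lt_inf'_iff]
    intro f' hf'
    exact hposval f' hf' y hy
  have hfx0 : 0 < f x := hfpos x hx
  -- key geometric lemma
  have key : ∀ f', ∀ hm : f' ∈ F, ∀ y : ℕ, f' (y:ℕ) < f x / T →
      |(y:ℝ) - a f' hm| < |(x:ℝ) - a f' hm| / K := by
    intro f' hm y hlt
    by_contra hge
    push_neg at hge
    set a0 := a f' hm with ha0
    set d := |(x:ℝ) - a0| with hd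
    set e := |(y:ℝ) - a0| with he
    have hd0 : 0 ≤ d := abs_nonneg _
    have he0 : 0 ≤ e := abs_nonneg _
    have hfx_le : f x ≤ f' (x:ℕ) := by
      rw [hf x hx]; exact Finset.inf'_le _ hm
    have hfx' : f' ((x:ℕ):ℝ) = g f' hm d := by rw [hfg f' hm]
    have hfy' : f' ((y:ℕ):ℝ) = g f' hm e := by rw [hfg f' hm]
    have hkey2 : f' ((x:ℕ):ℝ) ≤ T * f' ((y:ℕ):ℝ) := by
      rcases le_or_gt d e with hde | hed
      · have hmono := hg_mono f' hm d e hd0 hde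
        have hgnn := hg_nonneg f' hm e he0
        rw [hfx', hfy']
        nlinarith
      · have hepos : 0 < e := by
          rcases eq_or_lt_of_le he0 with h0 | h0
          · exfalso
            have hdK : d / K ≤ e := hge
            rw [← h0] at hdK
            have : d ≤ 0 := by
              by_contra hh; push_neg at hh
              have : 0 < d / K := div_pos hh hK0
              linarith
            linarith
          · exact h0
        set c := d / e with hc
        have hc1 : (1:ℝ) ≤ c := (one_le_div hepos).2 hed.le
        have hcK : c ≤ K := by
          rw [hc, div_le_iff₀ hepos]
          have hdK : d ≤ e * K := by
            have := (div_le_iff₀ hK0).1 hge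
            linarith
          linarith
        have hce : c * e = d := div_mul_cancel₀ d (ne_of_gt hepos)
        have hlip := hg_lip f' hm c e hc1 he0
        rw [hce] at hlip
        have hge0 : 0 ≤ g f' hm e := hg_nonneg f' hm e he0
        have hcr : c ^ r ≤ K ^ r := Real.rpow_le_rpow (by linarith) hcK hr
        rw [hfx', hfy', hTdef]
        calc g f' hm d ≤ c ^ r * g f' hm e := hlip
          _ ≤ K ^ r * g f' hm e := by nlinarith
    have hcontr : f x / T ≤ f' ((y:ℕ):ℝ) := by
      rw [div_le_iff₀ hT0]
      calc f x ≤ f' ((x:ℕ):ℝ) := hfx_le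
        _ ≤ T * f' ((y:ℕ):ℝ) := hkey2
        _ = f' ((y:ℕ):ℝ) * T := by ring
    linarith
  -- cardinality of bad sets
  have badcard : ∀ f', ∀ hm : f' ∈ F,
      (((S.filter (fun y : ℕ => f' (y:ℕ) < f x / T)).card : ℝ)) ≤ 2 * n / (K - 1) + 1 := by
    intro f' hm
    set B := S.filter (fun y : ℕ => f' (y:ℕ) < f x / T) with hB
    rcases B.eq_empty_or_nonempty with hBe | hBne
    · rw [hBe]
      simp only [Finset.card_empty, Nat.cast_zero]
      have : (0:ℝ) ≤ 2 * n / (K - 1) := div_nonneg (by positivity) (by linarith)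
      linarith
    · obtain ⟨y0, hy0⟩ := hBne
      set a0 := a f' hm with ha0
      set d := |(x:ℝ) - a0| with hd
      have hd0 : 0 ≤ d := abs_nonneg _
      have hy0S : y0 ∈ S := (Finset.mem_filter.1 hy0).1
      have hy0lt : f' (y0:ℕ) < f x / T := (Finset.mem_filter.1 hy0).2
      have hy0key := key f' hm y0 hy0lt
      have hxy0 : |(x:ℝ) - (y0:ℝ)| ≤ (n:ℝ) - 1 := by
        rw [hSdef, Finset.mem_Icc] at hx hy0S
        have h1 : (1:ℝ) ≤ (x:ℝ) := by exact_mod_cast hx.1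
        have h2 : (x:ℝ) ≤ (n:ℝ) := by exact_mod_cast hx.2
        have h3 : (1:ℝ) ≤ (y0:ℝ) := by exact_mod_cast hy0S.1
        have h4 : (y0:ℝ) ≤ (n:ℝ) := by exact_mod_cast hy0S.2
        rw [abs_le]
        constructor <;> linarith
      have hdbound : d * (K - 1) ≤ ((n:ℝ) - 1) * K := by
        have h1 : d ≤ |(x:ℝ) - (y0:ℝ)| + |(y0:ℝ) - a0| := abs_sub_le _ _ _
        have h3 : d < ((n:ℝ) - 1) + d / K := by linarith
        have h4 : d * K < (((n:ℝ) - 1) + d / K) * K := mul_lt_mul_of_pos_right h3 hK0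
        rw [add_mul, div_mul_cancel₀ _ (ne_of_gt hK0)] at h4
        nlinarith
      have hLnn : (0:ℝ) ≤ 2 * d / K := by positivity
      have hdiam : ∀ y ∈ B, ∀ z ∈ B, (y : ℝ) ≤ (z : ℝ) + 2 * d / K := by
        intro y hyB z hzB
        have hy := key f' hm y (Finset.mem_filter.1 hyB).2
        have hz := key f' hm z (Finset.mem_filter.1 hzB).2
        have h1 : (y:ℝ) - a0 ≤ |(y:ℝ) - a0| := le_abs_self _
        have h2 : -((z:ℝ) - a0) ≤ |(z:ℝ) - a0| := neg_le_abs _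
        have h3 : 2 * d / K = d / K + d / K := by ring
        linarith
      have hcb := card_le_of_interval B (2 * d / K) hLnn hdiam
      have hfin : 2 * d / K ≤ 2 * n / (K - 1) := by
        rw [div_le_div_iff₀ hK0 (by linarith : (0:ℝ) < K - 1)]
        nlinarith
      linarith
  -- the bad set overall
  have hmiss_card : ((S.filter (fun y : ℕ => f y < f x / T)).card : ℝ) ≤
      (k:ℝ) * (2 * n / (K - 1) + 1) := by
    have hsub : S.filter (fun y : ℕ => f y < f x / T) ⊆
        F.biUnion (fun f' => S.filter (fun y : ℕ => f' (y:ℕ) < f x / T)) := by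
      intro y hy
      rw [Finset.mem_filter] at hy
      obtain ⟨hyS, hylt⟩ := hy
      rw [hf y hyS, Finset.inf'_lt_iff] at hylt
      obtain ⟨f', hm, hlt⟩ := hylt
      exact Finset.mem_biUnion.2 ⟨f', hm, Finset.mem_filter.2 ⟨hyS, hlt⟩⟩
    have h1 := Finset.card_le_card hsub
    have h2 := Finset.card_biUnion_le (s := F)
      (t := fun f' => S.filter (fun y : ℕ => f' (y:ℕ) < f x / T))
    have h3 : ((S.filter (fun y : ℕ => f y < f x / T)).card : ℝ) ≤
        ∑ f' ∈ F, (((S.filter (fun y : ℕ => f' (y:ℕ) < f x / T)).card : ℝ)) := by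
      have := le_trans h1 h2
      exact_mod_cast this
    have h4 : ∑ f' ∈ F, (((S.filter (fun y : ℕ => f' (y:ℕ) < f x / T)).card : ℝ)) ≤
        ∑ _f' ∈ F, (2 * (n:ℝ) / (K - 1) + 1) :=
      Finset.sum_le_sum (fun f' hm => badcard f' hm)
    rw [Finset.sum_const, hFcard, nsmul_eq_mul] at h4
    linarith
  -- good set
  set good := S.filter (fun y : ℕ => ¬ (f y < f x / T)) with hgood
  have hScard : S.card = n := by rw [hSdef, Nat.card_Icc]; omega
  have hcardsum : (S.filter (fun y : ℕ => f y < f x / T)).card + good.card = n := by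
    have h := Finset.card_filter_add_card_filter_not
      (s := S) (p := fun y : ℕ => f y < f x / T)
    rw [hScard] at h
    rw [hgood]
    exact h
  have hgc : (good.card : ℝ) =
      (n:ℝ) - ((S.filter (fun y : ℕ => f y < f x / T)).card : ℝ) := by
    have hle : (S.filter (fun y : ℕ => f y < f x / T)).card ≤ n := by omega
    have h2 : good.card = n - (S.filter (fun y : ℕ => f y < f x / T)).card := by omega
    rw [h2]
    rw [Nat.cast_sub hle]
  have hgoodK : (n:ℝ) ≤ K * (good.card : ℝ) := by
    have hB2 : (k:ℝ) * (2 * (n:ℝ) / (K - 1)) ≤ 2 * (n:ℝ) / 9 := by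
      have heq : (k:ℝ) * (2 * (n:ℝ) / (K - 1)) = 2 * (k:ℝ) * (n:ℝ) / (K - 1) := by ring
      rw [heq, div_le_div_iff₀ (by linarith : (0:ℝ) < K - 1) (by norm_num : (0:ℝ) < 9)]
      rw [hKdef]
      nlinarith [mul_nonneg (by linarith : (0:ℝ) ≤ (k:ℝ) - 1) hn0.le]
    have hC : ((S.filter (fun y : ℕ => f y < f x / T)).card : ℝ) ≤
        2 * (n:ℝ) / 9 + (n:ℝ) / 10 := by
      have hkn : (k:ℝ) ≤ (n:ℝ) / 10 := by linarith
      have : (k:ℝ) * (2 * n / (K - 1) + 1) = (k:ℝ) * (2 * n / (K - 1)) + (k:ℝ) := by ring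
      linarith [hmiss_card, this]
    have hD : 61 * (n:ℝ) / 90 ≤ (good.card : ℝ) := by
      rw [hgc]; linarith
    have hE : 10 * (61 * (n:ℝ) / 90) ≤ K * (good.card : ℝ) :=
      mul_le_mul hK10 hD (by linarith) (by linarith)
    linarith
  -- sum bound
  have hsum_ge : (good.card : ℝ) * (f x / T) ≤ ∑ x' ∈ S, f x' := by
    have h1 : ∑ x' ∈ good, f x' ≤ ∑ x' ∈ S, f x' :=
      Finset.sum_le_sum_of_subset_of_nonneg (Finset.filter_subset _ _)
        (fun i hi _ => (hfpos i hi).le)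
    have h2 : good.card • (f x / T) ≤ ∑ x' ∈ good, f x' := by
      apply Finset.card_nsmul_le_sum
      intro y hy
      have hny := (Finset.mem_filter.1 hy).2
      exact not_lt.1 hny
    rw [nsmul_eq_mul] at h2
    linarith
  have hsum_pos : 0 < ∑ x' ∈ S, f x' := Finset.sum_pos (fun i hi => hfpos i hi) ⟨x, hx⟩
  -- conclude
  rw [div_le_div_iff₀ hsum_pos hn0]
  have hrpow : K ^ (r + 1) = T * K := by
    rw [hTdef]; exact Real.rpow_add_one (ne_of_gt hK0) r
  rw [hrpow]
  have h1 : (good.card : ℝ) * f x ≤ T * (∑ x' ∈ S, f x') := by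
    calc (good.card : ℝ) * f x = ((good.card : ℝ) * (f x / T)) * T := by
          field_simp
      _ ≤ (∑ x' ∈ S, f x') * T := mul_le_mul_of_nonneg_right hsum_ge hT0.le
      _ = T * ∑ x' ∈ S, f x' := by ring
  have h2 : (n:ℝ) * f x ≤ K * ((good.card : ℝ) * f x) := by
    calc (n:ℝ) * f x ≤ (K * (good.card : ℝ)) * f x :=
          mul_le_mul_of_nonneg_right hgoodK hfx0.le
      _ = K * ((good.card : ℝ) * f x) := by ring
  have h3 : K * ((good.card : ℝ) * f x) ≤ K * (T * (∑ x' ∈ S, f x')) :=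
    mul_le_mul_of_nonneg_left h1 hK0.le
  calc f x * (n:ℝ) = (n:ℝ) * f x := by ring
    _ ≤ K * ((good.card : ℝ) * f x) := h2
    _ ≤ K * (T * (∑ x' ∈ S, f x')) := h3
    _ = T * K * ∑ x' ∈ S, f x' := by ring
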